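/- Let M = (E, H) be a simple matroid with flat lattice L, and let E = F_k > F_{k-1} > ··· > F_1 > F_0 = ∅ be a maximal chain of flats, with associated partition Q_i = F_i \ F_{i-1} of E. If W = {x_1,…,x_t} ⊆ E is a partial transversal of this partition (i.e., |W ∩ Q_i| ≤ 1 for all i), then the atoms {{x_1},…,{x_t}} index independent rows of the complemented structure matrix A^c of L, with a witness among the columns indexed by {F_0,…,F_{k-1}}. -/

import Mathlib

open scoped Classical

/-- The superboolean semiring `SB = {0, 1, 1^ν}`. -/
def SB := Fin 3

instance : DecidableEq SB := inferInstanceAs (DecidableEq (Fin 3))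
instance : Fintype SB := inferInstanceAs (Fintype (Fin 3))

def SB.zero : SB := (0 : Fin 3)
def SB.one : SB := (1 : Fin 3)
/-- The ghost element `1^ν`. -/
def SB.nu : SB := (2 : Fin 3)

def SB.val (a : SB) : ℕ := Fin.val a

instance : Zero SB := ⟨SB.zero⟩
instance : One SB := ⟨SB.one⟩

def SB.add (a b : SB) : SB := (⟨min (a.val + b.val) 2, by omega⟩ : Fin 3)
def SB.mul (a b : SB) : SB := (⟨min (a.val * b.val) 2, by omega⟩ : Fin 3)

instance : Add SB := ⟨SB.add⟩
instance : Mul SB := ⟨SB.mul⟩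

instance : AddCommMonoid SB where
  add := (· + ·)
  add_assoc := by decide
  zero_add := by decide
  add_zero := by decide
  add_comm := by decide
  nsmul := nsmulRec

instance : CommMonoid SB where
  mul := (· * ·)
  mul_assoc := by decide
  one_mul := by decide
  mul_one := by decide
  mul_comm := by decide
  npow := npowRec

/-- The permanent of a square superboolean matrix. -/
def sbPer {n : ℕ} (A : Matrix (Fin n) (Fin n) SB) : SB :=
  ∑ π : Equiv.Perm (Fin n), ∏ i, A (π i) i

/-- A square superboolean matrix is nonsingular when its permanent is `1`. -/
def Nonsingular {n : ℕ} (A : Matrix (Fin n) (Fin n) SB) : Prop := sbPer A = SB.one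

/-- Membership in the ghost ideal `{0, 1^ν}`. -/
def SB.IsGhost (a : SB) : Prop := a = SB.zero ∨ a = SB.nu

/-- A family of superboolean vectors is dependent if some nontrivial boolean
combination of them lies entirely in the ghost ideal. -/
def SBDep {κ ι : Type*} [Fintype κ] (v : κ → ι → SB) : Prop :=
  ∃ α : κ → SB, (∀ k, α k = SB.zero ∨ α k = SB.one) ∧ (∃ k, α k ≠ SB.zero) ∧
    ∀ j : ι, SB.IsGhost (∑ k, α k * v k j)

/-- Independence of a family of superboolean vectors. -/
def SBIndep {κ ι : Type*} [Fintype κ] (v : κ → ι → SB) : Prop := ¬ SBDep v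

/-- A matrix is boolean if none of its entries is the ghost `1^ν`. -/
def IsBooleanMat {ι κ : Type*} (A : Matrix ι κ SB) : Prop := ∀ i j, A i j ≠ SB.nu
/-- A matroid in the sense of Whitney: a nonempty hereditary collection of
independent sets satisfying the exchange axiom. -/
structure PaperMatroid (E : Type*) [Fintype E] where
  Indep : Set E → Prop
  exists_indep : ∃ X, Indep X
  indep_subset : ∀ ⦃X Y : Set E⦄, X ⊆ Y → Indep Y → Indep X
  exchange : ∀ ⦃X Y : Set E⦄, Indep X → Indep Y → Y.ncard = X.ncard + 1 →
    ∃ y ∈ Y \ X, Indep (insert y X)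

namespace PaperMatroid

variable {E : Type*} [Fintype E] (M : PaperMatroid E)

/-- A circuit: a minimal dependent set. -/
def Circuit (C : Set E) : Prop := ¬ M.Indep C ∧ ∀ D ⊂ C, M.Indep D

/-- The closure of `X`: `X` together with all `y` for which some circuit
contained in `X ∪ {y}` contains `y`. -/
def cl (X : Set E) : Set E :=
  X ∪ {y | y ∉ X ∧ ∃ C, M.Circuit C ∧ C ⊆ insert y X ∧ y ∈ C}

/-- A flat (closed set). -/
def Flat (F : Set E) : Prop := M.cl F = F

/-- A simple matroid: every subset of size at most `2` is independent. -/
def Simple : Prop := ∀ X : Set E, X.ncard ≤ 2 → M.Indep X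

/-- A basis: a maximal independent set. -/
def Basis (B : Set E) : Prop :=
  M.Indep B ∧ ∀ X : Set E, M.Indep X → B ⊆ X → X = B

/-- The lattice of flats of `M`, ordered by inclusion. -/
abbrev Flats := {F : Set E // M.Flat F}

end PaperMatroid

/-- The complemented structure matrix of the lattice of flats of `M`:
entry `(F, G)` is `1` iff `F ⊄ G`, and `0` iff `F ⊆ G`. -/
noncomputable def AcM {E : Type*} [Fintype E] (M : PaperMatroid E) :
    Matrix M.Flats M.Flats SB :=
  fun F G => if F.1 ⊆ G.1 then SB.zero else SB.one



section Aux

lemma SB.val_add' (a b : SB) : (a + b).val = min (a.val + b.val) 2 := rfl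
lemma SB.val_mul' (a b : SB) : (a * b).val = min (a.val * b.val) 2 := rfl
lemma SB.val_zero' : (0 : SB).val = 0 := rfl
lemma SB.val_one' : (1 : SB).val = 1 := rfl
lemma SB.val_zero'' : SB.zero.val = 0 := rfl
lemma SB.val_one'' : SB.one.val = 1 := rfl
lemma SB.val_nu' : SB.nu.val = 2 := rfl

lemma SB.val_inj {a b : SB} (h : a.val = b.val) : a = b := Fin.val_injective h

lemma SB.val_sum {ι : Type*} (s : Finset ι) (f : ι → SB) :
    (∑ i ∈ s, f i).val = min (∑ i ∈ s, (f i).val) 2 := by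
  induction s using Finset.cons_induction with
  | empty => simp [SB.val_zero']
  | cons a s ha ih =>
      rw [Finset.sum_cons, Finset.sum_cons, SB.val_add', ih]
      omega

lemma SB.val_prod {ι : Type*} (s : Finset ι) (f : ι → SB) :
    (∏ i ∈ s, f i).val = min (∏ i ∈ s, (f i).val) 2 := by
  induction s using Finset.cons_induction with
  | empty => simp [SB.val_one']
  | cons a s ha ih =>
      rw [Finset.prod_cons, Finset.prod_cons, SB.val_mul', ih]
      have h1 : (f a).val < 3 := Fin.isLt (f a)
      have h2 : (f a).val = 0 ∨ (f a).val = 1 ∨ (f a).val = 2 := by omega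
      rcases h2 with h | h | h <;> rw [h] <;> omega

end Aux

/-- A partial transversal of the partition arising from a maximal chain of flats gives
atoms whose rows in the complemented structure matrix are independent, with a witness
among the columns `F 0, …, F (k-1)`. -/
theorem transversal_rows_indep {E : Type*} [Fintype E] (M : PaperMatroid E)
    (hs : M.Simple) {k t : ℕ} (F : Fin (k + 1) → Set E)
    (hflat : ∀ i, M.Flat (F i)) (hmono : StrictMono F)
    (hbot : F 0 = ∅) (htop : F (Fin.last k) = Set.univ)
    (hmax : ∀ i : Fin k, ∀ G : Set E, M.Flat G →
      ¬ (F i.castSucc ⊂ G ∧ G ⊂ F i.succ))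
    (x : Fin t → E) (hx : Function.Injective x)
    (htrans : ∀ a b : Fin t, ∀ i : Fin k,
      x a ∈ F i.succ \ F i.castSucc → x b ∈ F i.succ \ F i.castSucc → a = b) :
    SBIndep (fun a (G : M.Flats) => if x a ∈ G.1 then SB.zero else SB.one) ∧
    ∃ g : Fin t → Fin k, Function.Injective g ∧
      Nonsingular (fun a b : Fin t =>
        if x a ∈ F (g b).castSucc then SB.zero else SB.one) := by
  classical
  -- the level function: every element lies in a unique layer of the chain
  have hlev : ∀ e : E, ∃ i : Fin k, e ∈ F i.succ ∧ e ∉ F i.castSucc := by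
    intro e
    set S : Finset (Fin (k + 1)) := Finset.univ.filter (fun j => e ∈ F j) with hS
    have hne : S.Nonempty := ⟨Fin.last k, by simp [hS, htop]⟩
    set m := S.min' hne with hm
    have hmS : m ∈ S := S.min'_mem hne
    have hmF : e ∈ F m := by simpa [hS] using hmS
    have hm0 : m ≠ 0 := by
      intro h0
      rw [h0, hbot] at hmF
      exact hmF
    have hmv : 1 ≤ m.val := by
      rcases Nat.eq_zero_or_pos m.val with h | h
      · exact absurd (Fin.ext h) hm0
      · exact h
    have hik : m.val - 1 < k := by have := Fin.isLt m; omega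
    refine ⟨⟨m.val - 1, hik⟩, ?_, ?_⟩
    · have hsm : (⟨m.val - 1, hik⟩ : Fin k).succ = m := by
        apply Fin.ext; simp [Fin.val_succ]; omega
      rw [hsm]; exact hmF
    · intro hc
      have hmem : (⟨m.val - 1, hik⟩ : Fin k).castSucc ∈ S := by
        simp [hS]; exact hc
      have hle := S.min'_le _ hmem
      rw [← hm] at hle
      have : m.val ≤ m.val - 1 := hle
      omega
  choose g hg1 hg2 using fun a => hlev (x a)
  -- membership characterization
  have hmem : ∀ (a : Fin t) (j : Fin (k + 1)), x a ∈ F j ↔ (g a).succ ≤ j := by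
    intro a j
    constructor
    · intro h
      by_contra hlt
      push_neg at hlt
      have hj : j ≤ (g a).castSucc := by
        have h1 : j.val < (g a).val + 1 := hlt
        exact h1 |> fun h1 => by
          have : j.val ≤ (g a).val := by omega
          exact this
      exact hg2 a (hmono.monotone hj h)
    · intro h
      exact hmono.monotone h (hg1 a)
  have hcast : ∀ a b : Fin t, x a ∈ F (g b).castSucc ↔ g a < g b := by
    intro a b
    rw [hmem a]
    constructor
    · intro h
      have : (g a).val + 1 ≤ (g b).val := h
      exact this
    · intro h
      show (g a).val + 1 ≤ (g b).val
      exact h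
  -- injectivity of g
  have hginj : Function.Injective g := by
    intro a b h
    refine htrans a b (g a) ⟨hg1 a, hg2 a⟩ ?_
    rw [h]
    exact ⟨hg1 b, hg2 b⟩
  -- only the identity permutation respects the order
  have hperm : ∀ π : Equiv.Perm (Fin t), (∀ i, ¬ g (π i) < g i) → π = 1 := by
    intro π hπ
    have hle : ∀ i, (g i).val ≤ (g (π i)).val := by
      intro i
      have := hπ i
      rw [Fin.lt_def] at this
      omega
    have hsum : ∑ i, (g (π i)).val = ∑ i, (g i).val :=
      Equiv.sum_comp π (fun i => (g i).val)
    have heq : ∀ i, (g (π i)).val = (g i).val := by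
      by_contra hc
      push_neg at hc
      obtain ⟨i, hi⟩ := hc
      have hlt : ∑ i, (g i).val < ∑ i, (g (π i)).val :=
        Finset.sum_lt_sum (fun i _ => hle i)
          ⟨i, Finset.mem_univ i, lt_of_le_of_ne (hle i) (Ne.symm hi)⟩
      omega
    exact Equiv.ext fun i => hginj (Fin.val_injective (heq i))
  constructor
  · -- independence
    rintro ⟨α, hα01, ⟨a0, ha0⟩, hghost⟩
    set s : Finset (Fin t) := Finset.univ.filter (fun a => α a ≠ SB.zero) with hs
    have hsne : s.Nonempty := ⟨a0, by simp [hs, ha0]⟩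
    obtain ⟨b, hbs, hbmax⟩ := s.exists_max_image (fun a => (g a).val) hsne
    have hαb : α b = SB.one := by
      rcases hα01 b with h | h
      · exact absurd h (by simpa [hs] using hbs)
      · exact h
    have := hghost ⟨F (g b).castSucc, hflat _⟩
    have hval : (∑ a, α a * (if x a ∈ F (g b).castSucc then SB.zero else SB.one)).val = 1 := by
      rw [SB.val_sum]
      have hterm : ∀ a : Fin t,
          (α a * (if x a ∈ F (g b).castSucc then SB.zero else SB.one)).val =
          if a = b then 1 else 0 := by
        intro a
        rw [SB.val_mul']
        by_cases hab : a = b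
        · subst hab
          rw [if_neg (hg2 a), if_pos rfl, hαb, SB.val_one'']
          omega
        · rw [if_neg hab]
          by_cases has : α a = SB.zero
          · rw [has, SB.val_zero'']; simp
          · have hasm : a ∈ s := by simp [hs, has]
            have hga : (g a).val ≤ (g b).val := hbmax a hasm
            have hgab : g a ≠ g b := fun h => hab (hginj h)
            have hlt : g a < g b := by
              rw [Fin.lt_def]
              exact lt_of_le_of_ne hga (fun h => hgab (Fin.val_injective h))
            rw [if_pos ((hcast a b).2 hlt), SB.val_zero'']
            simp
      rw [Finset.sum_congr rfl (fun a _ => hterm a)]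
      rw [Finset.sum_ite_eq' Finset.univ b (fun _ => 1)]
      simp
    rcases this with h | h
    · rw [h, SB.val_zero''] at hval; omega
    · rw [h, SB.val_nu'] at hval; omega
  · -- nonsingularity of the square submatrix
    refine ⟨g, hginj, ?_⟩
    apply SB.val_inj
    rw [SB.val_one'']
    unfold sbPer
    rw [SB.val_sum]
    have hprod : ∀ π : Equiv.Perm (Fin t),
        (∏ i, (if x (π i) ∈ F (g i).castSucc then SB.zero else SB.one)).val =
        if π = 1 then 1 else 0 := by
      intro π
      rw [SB.val_prod]
      by_cases hπ : π = 1
      · subst hπ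
        have : ∀ i : Fin t,
            ((if x ((1 : Equiv.Perm (Fin t)) i) ∈ F (g i).castSucc then SB.zero else SB.one)).val
              = 1 := by
          intro i
          have : ¬ x ((1 : Equiv.Perm (Fin t)) i) ∈ F (g i).castSucc := hg2 i
          rw [if_neg this, SB.val_one'']
        rw [Finset.prod_congr rfl (fun i _ => this i)]
        simp
      · have : ∃ i, g (π i) < g i := by
          by_contra hc
          push_neg at hc
          exact hπ (hperm π (fun i => not_lt.mpr (hc i)))
        obtain ⟨i, hi⟩ := this
        have hz : ((if x (π i) ∈ F (g i).castSucc then SB.zero else SB.one)).val = 0 := by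
          rw [if_pos ((hcast (π i) i).2 hi), SB.val_zero'']
        rw [if_neg hπ, Finset.prod_eq_zero (Finset.mem_univ i) hz]
        simp
    rw [Finset.sum_congr rfl (fun π _ => hprod π)]
    rw [Finset.sum_ite_eq' Finset.univ (1 : Equiv.Perm (Fin t)) (fun _ => 1)]
    simp
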